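/- Let T be a finite tree rooted at vertex v, whose edges are hypercube edges (each edge connects s and s¬i for some coordinate i), with vertex set contained in {0,1}^n. Then there exists an assignment of values d_i(s) to the edges (with d_i(s¬i) = −d_i(s)) such that for every non-root vertex s of T, the sum over edges of T incident to s of d evaluated at s equals −1. -/

import Mathlib

/-- Flip coordinate `i` of a vertex of the hypercube `{0,1}^n`. -/
def flipAt (n : ℕ) (s : Fin n → Bool) (i : Fin n) : Fin n → Bool :=
  Function.update s i (!(s i))

/-- The `n`-dimensional hypercube graph on `{0,1}^n`: two vertices are
adjacent iff they differ in exactly one coordinate. -/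
def cube (n : ℕ) : SimpleGraph (Fin n → Bool) :=
  SimpleGraph.fromRel (fun s t => ∃ i, t = flipAt n s i)

/-- `C` is a connected component of the induced subgraph of the hypercube on `A`:
a maximal connected subset of `A`. -/
def IsCompOf (n : ℕ) (A C : Set (Fin n → Bool)) : Prop :=
  C.Nonempty ∧ C ⊆ A ∧ ((cube n).induce C).Connected ∧
    ∀ D, C ⊆ D → D ⊆ A → ((cube n).induce D).Connected → D = C

lemma flipAt_flip_flip (n : ℕ) (s : Fin n → Bool) (i : Fin n) : flipAt n (flipAt n s i) i = s := by
  funext j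
  by_cases h : j = i
  · subst h; simp [flipAt]
  · simp [flipAt, Function.update_apply, h]

lemma flip_inj {n : ℕ} {s : Fin n → Bool} {i j : Fin n} (h : flipAt n s i = flipAt n s j) :
    i = j := by
  by_contra hij
  have := congrFun h i
  simp [flipAt, Function.update_apply, hij] at this

lemma cube_adj_exists {n : ℕ} {a b : Fin n → Bool} (h : (cube n).Adj a b) :
    ∃ i, b = flipAt n a i := by
  rw [cube, SimpleGraph.fromRel_adj] at h
  obtain ⟨-, h | ⟨i, hi⟩⟩ := h
  · exact h
  · exact ⟨i, by rw [hi, flipAt_flip_flip]⟩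

lemma countP_nodup_eq {α : Type*} [DecidableEq α] {l : List α} (h : l.Nodup) (c : α) :
    l.countP (fun x => decide (x = c)) = if c ∈ l then 1 else 0 := by
  rw [← h.count (a := c), List.count_eq_countP]
  apply List.countP_congr
  intro a _
  simp

lemma sum_countP {ι α : Type*} (S : Finset ι) (l : List α) (q : ι → α → Bool) (r : α → Bool)
    (h : ∀ a ∈ l, (∑ i ∈ S, if q i a then 1 else 0) = if r a then (1 : ℕ) else 0) :
    ∑ i ∈ S, l.countP (q i) = l.countP r := by
  induction l with
  | nil => simp
  | cons a l ih =>
    simp only [List.countP_cons, Finset.sum_add_distrib]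
    rw [ih (fun a ha => h a (List.mem_cons_of_mem _ ha)), h a List.mem_cons_self]

lemma path_count {α : Type*} [DecidableEq α] {G : SimpleGraph α} {a b : α} (p : G.Walk a b)
    (hp : p.IsPath) (c : α) (hcb : c ≠ b) :
    ((p.darts.countP (fun dd => decide (dd.snd = c)) : ℝ))
      - (p.darts.countP (fun dd => decide (dd.fst = c)) : ℝ) = if a = c then -1 else 0 := by
  have h1 : p.darts.countP (fun dd => decide (dd.snd = c))
      = p.support.tail.countP (fun x => decide (x = c)) := by
    rw [← p.map_snd_darts, List.countP_map]; rfl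
  have h2 : p.darts.countP (fun dd => decide (dd.fst = c))
      = p.support.dropLast.countP (fun x => decide (x = c)) := by
    rw [← p.map_fst_darts, List.countP_map]; rfl
  have hnd := hp.support_nodup
  have hlast : p.support.dropLast ++ [b] = p.support := by
    have h3 := p.map_fst_darts_append
    rw [p.map_fst_darts] at h3
    exact h3
  rw [h1, h2, countP_nodup_eq ((List.tail_sublist _).nodup hnd) c,
    countP_nodup_eq ((List.dropLast_sublist _).nodup hnd) c]
  have hcons := p.support_eq_cons
  by_cases hac : a = c
  · subst hac
    have hnt : a ∉ p.support.tail := by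
      rw [hcons] at hnd
      exact (List.nodup_cons.mp hnd).1
    have hdl : a ∈ p.support.dropLast := by
      have := p.start_mem_support
      rw [← hlast, List.mem_append, List.mem_singleton] at this
      tauto
    simp [hnt, hdl]
  · by_cases hcs : c ∈ p.support
    · have hnt : c ∈ p.support.tail := by
        rw [hcons, List.mem_cons] at hcs
        tauto
      have hdl : c ∈ p.support.dropLast := by
        rw [← hlast, List.mem_append, List.mem_singleton] at hcs
        tauto
      simp [hnt, hdl, hac]
    · have hnt : c ∉ p.support.tail := fun hh => hcs ((List.tail_sublist _).mem hh)
      have hdl : c ∉ p.support.dropLast := fun hh => hcs ((List.dropLast_sublist _).mem hh)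
      simp [hnt, hdl, hac]

open Classical in
/-- On a finite tree `T` of hypercube edges rooted at `v` one can assign antisymmetric
edge values `d` so that at every non-root vertex the signed sum of incident tree-edge
values equals `−1`. -/
theorem stmt8 (n : ℕ) (H : (cube n).Subgraph) (hT : H.coe.IsTree)
    (v : Fin n → Bool) (hv : v ∈ H.verts) :
    ∃ d : (Fin n → Bool) → Fin n → ℝ,
      (∀ (s : Fin n → Bool) (i : Fin n), d (flipAt n s i) i = - d s i) ∧
      ∀ s ∈ H.verts, s ≠ v →
        (∑ i ∈ Finset.univ.filter (fun i : Fin n => H.Adj s (flipAt n s i)), d s i) = -1 := by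
  classical
  haveI : Fintype ↥H.verts := Fintype.ofFinite _
  have hch : ∀ w : ↥H.verts, ∃ q : H.coe.Walk w ⟨v, hv⟩, q.IsPath :=
    fun w => (hT.existsUnique_path w ⟨v, hv⟩).exists
  choose p hp using hch
  refine ⟨fun s i => ∑ w : ↥H.verts,
      ((((p w).darts.countP (fun dd => decide (dd.fst.val = flipAt n s i ∧ dd.snd.val = s)) : ℕ) : ℝ)
      - (((p w).darts.countP (fun dd => decide (dd.fst.val = s ∧ dd.snd.val = flipAt n s i)) : ℕ) : ℝ)),
    ?_, ?_⟩
  · intro s i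
    rw [← Finset.sum_neg_distrib]
    refine Finset.sum_congr rfl fun w _ => ?_
    rw [flipAt_flip_flip]
    ring
  · intro s hs hsv
    rw [Finset.sum_comm]
    have key : ∀ w : ↥H.verts,
        (∑ i ∈ Finset.univ.filter (fun i : Fin n => H.Adj s (flipAt n s i)),
          ((((p w).darts.countP (fun dd => decide (dd.fst.val = flipAt n s i ∧ dd.snd.val = s)) : ℕ) : ℝ)
          - (((p w).darts.countP (fun dd => decide (dd.fst.val = s ∧ dd.snd.val = flipAt n s i)) : ℕ) : ℝ)))
        = if w = ⟨s, hs⟩ then (-1 : ℝ) else 0 := by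
      intro w
      set S := Finset.univ.filter (fun i : Fin n => H.Adj s (flipAt n s i)) with hS
      rw [Finset.sum_sub_distrib]
      have hin : ∑ i ∈ S,
          ((((p w).darts.countP (fun dd => decide (dd.fst.val = flipAt n s i ∧ dd.snd.val = s)) : ℕ) : ℝ))
          = (((p w).darts.countP (fun dd => decide (dd.snd = (⟨s, hs⟩ : ↥H.verts))) : ℕ) : ℝ) := by
        rw [← Nat.cast_sum]
        congr 1
        apply sum_countP
        intro dd _
        by_cases h : dd.snd.val = s
        · have hadj : H.Adj dd.fst.val dd.snd.val := dd.adj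
          rw [h] at hadj
          obtain ⟨i0, hi0⟩ := cube_adj_exists (H.adj_sub hadj.symm)
          have hmem : i0 ∈ S := by
            rw [hS, Finset.mem_filter]
            exact ⟨Finset.mem_univ _, by rw [← hi0]; exact hadj.symm⟩
          have heq : ∀ i ∈ S,
              (if (dd.fst.val = flipAt n s i ∧ dd.snd.val = s) then (1:ℕ) else 0)
              = if i = i0 then 1 else 0 := by
            intro i _
            congr 1
            simp only [eq_iff_iff]
            constructor
            · rintro ⟨h1, -⟩
              exact (flip_inj (hi0.symm.trans h1)).symm
            · rintro rfl
              exact ⟨hi0, h⟩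
          calc (∑ i ∈ S, if decide (dd.fst.val = flipAt n s i ∧ dd.snd.val = s) = true then (1:ℕ) else 0)
              = ∑ i ∈ S, if i = i0 then (1:ℕ) else 0 := by
                refine Finset.sum_congr rfl fun i hi => ?_
                rw [← heq i hi]
                simp
            _ = 1 := by rw [Finset.sum_ite_eq' S i0 (fun _ => 1)]; simp [hmem]
            _ = if decide (dd.snd = (⟨s, hs⟩ : ↥H.verts)) = true then 1 else 0 := by
                simp [Subtype.ext_iff, h]
        · have h2 : dd.snd ≠ (⟨s, hs⟩ : ↥H.verts) := fun hh => h (by rw [hh])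
          simp [h, h2]
      have hout : ∑ i ∈ S,
          ((((p w).darts.countP (fun dd => decide (dd.fst.val = s ∧ dd.snd.val = flipAt n s i)) : ℕ) : ℝ))
          = (((p w).darts.countP (fun dd => decide (dd.fst = (⟨s, hs⟩ : ↥H.verts))) : ℕ) : ℝ) := by
        rw [← Nat.cast_sum]
        congr 1
        apply sum_countP
        intro dd _
        by_cases h : dd.fst.val = s
        · have hadj : H.Adj dd.fst.val dd.snd.val := dd.adj
          rw [h] at hadj
          obtain ⟨i0, hi0⟩ := cube_adj_exists (H.adj_sub hadj)
          have hmem : i0 ∈ S := by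
            rw [hS, Finset.mem_filter]
            exact ⟨Finset.mem_univ _, by rw [← hi0]; exact hadj⟩
          have heq : ∀ i ∈ S,
              (if (dd.fst.val = s ∧ dd.snd.val = flipAt n s i) then (1:ℕ) else 0)
              = if i = i0 then 1 else 0 := by
            intro i _
            congr 1
            simp only [eq_iff_iff]
            constructor
            · rintro ⟨-, h1⟩
              exact (flip_inj (hi0.symm.trans h1)).symm
            · rintro rfl
              exact ⟨h, hi0⟩
          calc (∑ i ∈ S, if decide (dd.fst.val = s ∧ dd.snd.val = flipAt n s i) = true then (1:ℕ) else 0)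
              = ∑ i ∈ S, if i = i0 then (1:ℕ) else 0 := by
                refine Finset.sum_congr rfl fun i hi => ?_
                rw [← heq i hi]
                simp
            _ = 1 := by rw [Finset.sum_ite_eq' S i0 (fun _ => 1)]; simp [hmem]
            _ = if decide (dd.fst = (⟨s, hs⟩ : ↥H.verts)) = true then 1 else 0 := by
                simp [Subtype.ext_iff, h]
        · have h2 : dd.fst ≠ (⟨s, hs⟩ : ↥H.verts) := fun hh => h (by rw [hh])
          simp [h, h2]
      rw [hin, hout]
      exact path_count (p w) (hp w) ⟨s, hs⟩ (fun hh => hsv (congrArg Subtype.val hh))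
    rw [Finset.sum_congr rfl (fun w _ => key w), Finset.sum_ite_eq' Finset.univ (⟨s, hs⟩ : ↥H.verts) (fun _ => (-1 : ℝ))]
    simp
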